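/- The only ways to write 17 as a difference h − k of harmonic numbers h and k are: 18 − 1 and 81 − 64. -/

import Mathlib

/-- A harmonic number is a positive integer of the form 2^a * 3^b. -/
def IsHarmonic (n : ℕ) : Prop := ∃ a b : ℕ, n = 2 ^ a * 3 ^ b

lemma pow2_mod3 (c : ℕ) : 2 ^ c % 3 = if c % 2 = 0 then 1 else 2 := by
  induction c with
  | zero => rfl
  | succ n ih =>
    rw [pow_succ, Nat.mul_mod, ih]
    rcases Nat.mod_two_eq_zero_or_one n with hn | hn
    · rw [if_pos hn, if_neg (by omega)]
    · rw [if_neg (by omega), if_pos (by omega)]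

lemma pow3_mod4 (b : ℕ) : 3 ^ b % 4 = if b % 2 = 0 then 1 else 3 := by
  induction b with
  | zero => rfl
  | succ n ih =>
    rw [pow_succ, Nat.mul_mod, ih]
    rcases Nat.mod_two_eq_zero_or_one n with hn | hn
    · rw [if_pos hn, if_neg (by omega)]
    · rw [if_neg (by omega), if_pos (by omega)]

lemma pow3_mod8 (b : ℕ) : 3 ^ b % 8 = if b % 2 = 0 then 1 else 3 := by
  induction b with
  | zero => rfl
  | succ n ih =>
    rw [pow_succ, Nat.mul_mod, ih]
    rcases Nat.mod_two_eq_zero_or_one n with hn | hn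
    · rw [if_pos hn, if_neg (by omega)]
    · rw [if_neg (by omega), if_pos (by omega)]

/-- The only ways to write 17 as a difference of harmonic numbers are
18 - 1 and 81 - 64. -/
theorem seventeen_as_difference (h k : ℕ) (hh : IsHarmonic h) (hk : IsHarmonic k)
    (hdiff : 17 + k = h) :
    (h = 18 ∧ k = 1) ∨ (h = 81 ∧ k = 64) := by
  obtain ⟨a, b, rfl⟩ := hh
  obtain ⟨c, d, rfl⟩ := hk
  rcases Nat.eq_zero_or_pos a with ha | ha
  · subst ha
    rcases Nat.eq_zero_or_pos c with hc | hc
    · -- both odd: parity contradiction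
      subst hc
      have h1 : 3 ^ b % 2 = 1 := by simp [Nat.pow_mod]
      have h2 : 3 ^ d % 2 = 1 := by simp [Nat.pow_mod]
      simp only [pow_zero, one_mul] at hdiff
      omega
    · -- h = 3^b, k = 2^c * 3^d with c ≥ 1
      simp only [pow_zero, one_mul] at hdiff ⊢
      have hkpos : 1 ≤ 2 ^ c * 3 ^ d := Nat.one_le_iff_ne_zero.2 (by positivity)
      have hb1 : 1 ≤ b := by
        by_contra hb
        have : b = 0 := by omega
        subst this; simp at hdiff; omega
      have h3b : (3 : ℕ) ∣ 3 ^ b := dvd_pow_self 3 (by omega)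
      have hd0 : d = 0 := by
        by_contra hd
        have : (3 : ℕ) ∣ 3 ^ d := dvd_pow_self 3 hd
        have : (3 : ℕ) ∣ 2 ^ c * 3 ^ d := this.mul_left _
        omega
      subst hd0
      simp only [pow_zero, mul_one] at hdiff ⊢
      -- 2^c ≡ 1 mod 3, so c even
      have hm := pow2_mod3 c
      have hceven : c % 2 = 0 := by
        rcases Nat.eq_zero_or_pos (c % 2) with h0 | h1
        · exact h0
        · simp [show ¬ (c % 2 = 0) by omega] at hm; omega
      have hc2 : 2 ≤ c := by omega
      have h4c : (4 : ℕ) ∣ 2 ^ c := by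
        have : 2 ^ c = 2 ^ 2 * 2 ^ (c - 2) := by
          rw [← pow_add]; congr 1; omega
        rw [this]; exact Dvd.intro _ rfl
      have hm4 := pow3_mod4 b
      have hbeven : b % 2 = 0 := by
        rcases Nat.eq_zero_or_pos (b % 2) with h0 | h1
        · exact h0
        · simp [show ¬ (b % 2 = 0) by omega] at hm4; omega
      obtain ⟨x, hx⟩ : ∃ x, b = 2 * x := ⟨b / 2, by omega⟩
      obtain ⟨y, hy⟩ : ∃ y, c = 2 * y := ⟨c / 2, by omega⟩
      subst hx; subst hy
      have hs : (3 : ℕ) ^ (2 * x) = (3 ^ x) ^ 2 := by rw [← pow_mul, Nat.mul_comm]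
      have ht : (2 : ℕ) ^ (2 * y) = (2 ^ y) ^ 2 := by rw [← pow_mul, Nat.mul_comm]
      rw [hs, ht] at hdiff
      set s := (3 : ℕ) ^ x with hsdef
      set t := (2 : ℕ) ^ y with htdef
      have hts : t < s := by nlinarith
      have ht8 : t ≤ 8 := by nlinarith
      have hs9 : s ≤ 9 := by nlinarith
      have hy3 : y ≤ 3 := by
        by_contra hyc
        have : 2 ^ 4 ≤ 2 ^ y := Nat.pow_le_pow_right (by norm_num) (by omega)
        simp [htdef] at ht8; omega
      have hx2 : x ≤ 2 := by
        by_contra hxc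
        have : 3 ^ 3 ≤ 3 ^ x := Nat.pow_le_pow_right (by norm_num) (by omega)
        simp [hsdef] at hs9; omega
      simp only [hsdef, htdef] at hdiff
      interval_cases x <;> interval_cases y <;> norm_num at hdiff <;> simp_all
  · rcases Nat.eq_zero_or_pos c with hc | hc
    · -- h even, k = 3^d
      subst hc
      simp only [pow_zero, one_mul] at hdiff ⊢
      rcases Nat.eq_zero_or_pos d with hd | hd
      · subst hd
        left
        constructor
        · omega
        · rfl
      · -- d ≥ 1
        rcases Nat.eq_zero_or_pos b with hb | hb
        · subst hb
          simp only [pow_zero, mul_one] at hdiff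
          -- 17 + 3^d = 2^a
          rcases Nat.lt_or_ge a 3 with ha3 | ha3
          · have : 2 ^ a ≤ 4 := by
              calc 2 ^ a ≤ 2 ^ 2 := Nat.pow_le_pow_right (by norm_num) (by omega)
              _ = 4 := rfl
            have : 1 ≤ 3 ^ d := Nat.one_le_iff_ne_zero.2 (by positivity)
            omega
          · have h8 : (8 : ℕ) ∣ 2 ^ a := by
              have : 2 ^ a = 2 ^ 3 * 2 ^ (a - 3) := by
                rw [← pow_add]; congr 1; omega
              rw [this]; exact Dvd.intro _ rfl
            have hm8 := pow3_mod8 d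
            have h38 : 3 ^ d % 8 = 1 ∨ 3 ^ d % 8 = 3 := by
              rcases Nat.mod_two_eq_zero_or_one d with hd2 | hd2 <;> simp [hd2] at hm8 <;> omega
            omega
        · have : (3 : ℕ) ∣ 3 ^ b := dvd_pow_self 3 (by omega)
          have h1 : (3 : ℕ) ∣ 2 ^ a * 3 ^ b := this.mul_left _
          have h2 : (3 : ℕ) ∣ 3 ^ d := dvd_pow_self 3 (by omega)
          omega
    · -- both even
      have h1 : (2 : ℕ) ∣ 2 ^ a * 3 ^ b := (dvd_pow_self 2 (by omega)).mul_right _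
      have h2 : (2 : ℕ) ∣ 2 ^ c * 3 ^ d := (dvd_pow_self 2 (by omega)).mul_right _
      omega
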